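/- Let κ be an infinite cardinal and G an abelian group such that G \ {0} can be covered by κ many linearly independent subsets. If the torsion part G[ℕ] has cardinality greater than κ, then G = G[p] for some prime p, i.e., every element of G has order dividing p. -/

import Mathlib

/-- Linear independence of a subset of an abelian group in the sense of Fuchs. -/
def LinIndepSet {G : Type*} [AddCommGroup G] (A : Set G) : Prop :=
  ∀ (s : Finset G), ↑s ⊆ A → ∀ l : G → ℤ,
    ∑ a ∈ s, l a • a = 0 → ∀ a ∈ s, l a • a = 0

open Cardinal

/-- Pigeonhole: a set of size `> #ι` covered by `ι`-many sets must have two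
distinct points in one covering set. -/
lemma exists_pair_aux {G ι : Type u} (c : ι → Set G) (X : Set G)
    (hX : #ι < #X) (hcov : X ⊆ ⋃ i, c i) :
    ∃ i, ∃ a ∈ X ∩ c i, ∃ b ∈ X ∩ c i, a ≠ b := by
  by_contra h
  push_neg at h
  have hsub : ∀ i, #(↥(X ∩ c i)) ≤ 1 := by
    intro i
    rw [Cardinal.mk_le_one_iff_set_subsingleton]
    intro a ha b hb
    by_contra hne
    exact hne (h i a ha b hb)
  have hXeq : X ⊆ ⋃ i, X ∩ c i := by
    intro x hx
    rcases Set.mem_iUnion.mp (hcov hx) with ⟨i, hi⟩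
    exact Set.mem_iUnion.mpr ⟨i, hx, hi⟩
  have hfin : #X ≤ #ι := by
    calc #X ≤ #(↥(⋃ i, X ∩ c i)) := Cardinal.mk_le_mk_of_subset hXeq
      _ ≤ Cardinal.sum (fun i => #(↥(X ∩ c i))) := Cardinal.mk_iUnion_le_sum_mk
      _ ≤ Cardinal.sum (fun _ : ι => 1) := Cardinal.sum_le_sum _ _ hsub
      _ = #ι * 1 := Cardinal.sum_const' ι 1
      _ = #ι := mul_one _
  exact absurd hX (not_lt.mpr hfin)

/-- `#G[de] ≤ #G[d] * #G[e]`. -/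
lemma mk_smul_zero_mul {G : Type u} [AddCommGroup G] (d e : ℕ) :
    #{x : G | (d * e) • x = 0} ≤ #{x : G | d • x = 0} * #{x : G | e • x = 0} := by
  classical
  set A := {x : G | (d * e) • x = 0}
  set B := {x : G | d • x = 0}
  set C := {x : G | e • x = 0}
  have hmap : ∀ x : A, (e • (x : G)) ∈ B := by
    rintro ⟨x, hx⟩
    show d • (e • x) = 0
    rw [← mul_smul]
    exact hx
  let f : A → B := fun x => ⟨e • (x : G), hmap x⟩
  apply Cardinal.mk_le_mk_mul_of_mk_preimage_le f
  intro b
  rcases Set.eq_empty_or_nonempty (f ⁻¹' {b}) with hemp | ⟨x₀, hx₀⟩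
  · simp [hemp]
  · have hinj : Function.Injective
        (fun x : (f ⁻¹' {b}) => (⟨(x : A) - (x₀ : A), by
          have h1 : e • ((x : A) : G) = (b : G) := congrArg Subtype.val x.2
          have h2 : e • ((x₀ : A) : G) = (b : G) := congrArg Subtype.val hx₀
          show e • (((x : A) : G) - ((x₀ : A) : G)) = 0
          rw [smul_sub, h1, h2, sub_self]⟩ : C)) := by
      intro x y hxy
      have h1 : ((x : A) : G) - ((x₀ : A) : G) = ((y : A) : G) - ((x₀ : A) : G) :=
        congrArg Subtype.val hxy
      have h2 : ((x : A) : G) = ((y : A) : G) := by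
        have := sub_left_injective h1
        exact this
      exact Subtype.ext (Subtype.ext h2)
    exact Cardinal.mk_le_of_injective hinj

open Cardinal in
theorem stmt13 {G : Type u} [AddCommGroup G] (κ : Cardinal.{u}) (hκ : ℵ₀ ≤ κ)
    (hcover : ∃ c : κ.out → Set G, (∀ i, LinIndepSet (c i)) ∧
      {x : G | x ≠ 0} ⊆ ⋃ i, c i)
    (htor : κ < #{x : G | ∃ n : ℕ, 0 < n ∧ n • x = 0}) :
    ∃ p : ℕ, p.Prime ∧ ∀ x : G, p • x = 0 := by
  classical
  obtain ⟨c, hind, hcov⟩ := hcover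
  -- Step B: some n ≥ 1 with κ < #{x | n • x = 0}
  have hB : ∃ n : ℕ, 0 < n ∧ κ < #{x : G | n • x = 0} := by
    by_contra h
    push_neg at h
    have hcover' : {x : G | ∃ n : ℕ, 0 < n ∧ n • x = 0} ⊆
        ⋃ n : ULift.{u} ℕ, {x : G | 0 < n.down ∧ n.down • x = 0} := by
      rintro x ⟨n, hn, hx⟩
      exact Set.mem_iUnion.mpr ⟨⟨n⟩, hn, hx⟩
    have hle : #{x : G | ∃ n : ℕ, 0 < n ∧ n • x = 0} ≤ κ := by
      calc #{x : G | ∃ n : ℕ, 0 < n ∧ n • x = 0}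
          ≤ #(↥(⋃ n : ULift.{u} ℕ, {x : G | 0 < n.down ∧ n.down • x = 0})) :=
            Cardinal.mk_le_mk_of_subset hcover'
        _ ≤ Cardinal.sum (fun n : ULift.{u} ℕ =>
              #{x : G | 0 < n.down ∧ n.down • x = 0}) := Cardinal.mk_iUnion_le_sum_mk
        _ ≤ Cardinal.sum (fun _ : ULift.{u} ℕ => κ) := by
            apply Cardinal.sum_le_sum
            intro n
            rcases Nat.eq_zero_or_pos n.down with h0 | hpos
            · have hempty : {x : G | 0 < n.down ∧ n.down • x = 0} = ∅ := by
                ext x; simp [h0]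
              rw [hempty]
              simp
            · have hsub : {x : G | 0 < n.down ∧ n.down • x = 0} ⊆
                  {x : G | n.down • x = 0} := fun x hx => hx.2
              exact le_trans (Cardinal.mk_le_mk_of_subset hsub) (h n.down hpos)
        _ = #(ULift.{u} ℕ) * κ := Cardinal.sum_const' _ κ
        _ = ℵ₀ * κ := by rw [Cardinal.mk_uLift, Cardinal.mk_nat, Cardinal.lift_aleph0]
        _ = κ := by
            rw [Cardinal.mul_eq_max le_rfl hκ, max_eq_right hκ]
    exact absurd htor (not_lt.mpr hle)
  -- Step C: the minimal such n is prime
  set P : Set ℕ := {n | 0 < n ∧ κ < #{x : G | n • x = 0}} with hPdef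
  have hPne : P.Nonempty := hB
  set p : ℕ := sInf P with hpdef
  have hpP : p ∈ P := Nat.sInf_mem hPne
  have hpmin : ∀ k, 0 < k → k < p → #{x : G | k • x = 0} ≤ κ := by
    intro k hk hkp
    by_contra hc
    push_neg at hc
    exact absurd (Nat.sInf_le (show k ∈ P from ⟨hk, hc⟩)) (not_le.mpr hkp)
  have hppos : 0 < p := hpP.1
  have hpbig : κ < #{x : G | p • x = 0} := hpP.2
  have hp1 : p ≠ 1 := by
    intro h1
    have hset : {x : G | p • x = 0} = {(0 : G)} := by
      ext x; simp [h1]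
    rw [hset, Cardinal.mk_singleton] at hpbig
    exact absurd hpbig (not_lt.mpr (le_trans Cardinal.one_le_aleph0 hκ))
  have hprime : p.Prime := by
    by_contra hnp
    have h2 : 2 ≤ p := by omega
    obtain ⟨d, hdvd, hd2, hdp⟩ := Nat.exists_dvd_of_not_prime2 h2 hnp
    obtain ⟨e, he⟩ := hdvd
    have hdpos : 0 < d := by omega
    have hepos : 0 < e := by
      rcases Nat.eq_zero_or_pos e with h0 | h
      · exfalso; rw [h0, mul_zero] at he; omega
      · exact h
    have hep : e < p := by nlinarith
    have hle : #{x : G | p • x = 0} ≤ κ := by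
      calc #{x : G | p • x = 0} = #{x : G | (d * e) • x = 0} := by rw [← he]
        _ ≤ #{x : G | d • x = 0} * #{x : G | e • x = 0} := mk_smul_zero_mul d e
        _ ≤ κ * κ := mul_le_mul' (hpmin d hdpos hdp) (hpmin e hepos hep)
        _ = κ := Cardinal.mul_eq_self hκ
    exact absurd hpbig (not_lt.mpr hle)
  -- Step D: every element is killed by p
  refine ⟨p, hprime, fun x => ?_⟩
  set S : Set G := {s : G | p • s = 0} with hSdef
  set X : Set G := ((x + ·) '' S) \ {0} with hXdef
  have hXbig : κ < #X := by
    by_contra hc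
    push_neg at hc
    have himg : #(↥((x + ·) '' S)) = #S :=
      Cardinal.mk_image_eq (add_right_injective x)
    have hsub : ((x + ·) '' S) ⊆ X ∪ {0} := by
      intro y hy
      by_cases hy0 : y = 0
      · exact Or.inr hy0
      · exact Or.inl ⟨hy, hy0⟩
    have : #S ≤ κ := by
      calc #S = #(↥((x + ·) '' S)) := himg.symm
        _ ≤ #(↥(X ∪ ({0} : Set G))) := Cardinal.mk_le_mk_of_subset hsub
        _ ≤ #X + #({0} : Set G) := Cardinal.mk_union_le _ _
        _ ≤ κ + κ := by
            apply add_le_add hc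
            rw [Cardinal.mk_singleton]
            exact le_trans Cardinal.one_le_aleph0 hκ
        _ = κ := Cardinal.add_eq_self hκ
    exact absurd hpbig (not_lt.mpr this)
  have hXne : X ⊆ {x : G | x ≠ 0} := fun y hy => hy.2
  have hXκ : #(κ.out) < #X := by rwa [Cardinal.mk_out]
  obtain ⟨i, a, ⟨haX, hac⟩, b, ⟨hbX, hbc⟩, hab⟩ :=
    exists_pair_aux c X hXκ (fun y hy => hcov (hXne hy))
  obtain ⟨s, hs, hsa⟩ := haX.1
  obtain ⟨t, ht, htb⟩ := hbX.1
  -- apply linear independence to {a, b} with coefficients p, -p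
  have hstne : s ≠ t := by
    intro hst
    apply hab
    rw [← hsa, ← htb, hst]
  have habsub : ↑({a, b} : Finset G) ⊆ c i := by
    intro y hy
    simp only [Finset.coe_insert, Finset.coe_singleton, Set.mem_insert_iff,
      Set.mem_singleton_iff] at hy
    rcases hy with rfl | rfl
    · exact hac
    · exact hbc
  set l : G → ℤ := fun g => if g = a then (p : ℤ) else -(p : ℤ) with hldef
  have hsum : ∑ g ∈ ({a, b} : Finset G), l g • g = 0 := by
    rw [Finset.sum_pair hab]
    have hla : l a = (p : ℤ) := by simp [hldef]
    have hlb : l b = -(p : ℤ) := by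
      simp [hldef, (show b ≠ a from fun h => hab h.symm)]
    rw [hla, hlb, neg_smul, ← sub_eq_add_neg, ← smul_sub]
    have hab' : a - b = s - t := by
      rw [← hsa, ← htb]; beta_reduce; abel
    rw [hab', natCast_zsmul, smul_sub]
    rw [hs, ht, sub_zero]
  have hkill := hind i ({a, b} : Finset G) habsub l hsum a (by simp)
  have hpa : (p : ℤ) • a = 0 := by
    have hla : l a = (p : ℤ) := by simp [hldef]
    rwa [hla] at hkill
  have hpa' : p • a = 0 := by
    rwa [natCast_zsmul] at hpa
  rw [← hsa, smul_add, hs, add_zero] at hpa'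
  exact hpa'
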